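/- Let Ω be a measurable space, let S be a Souslin space (a metrizable topological space that is the image of a Polish space under a continuous map), and let X be a second countable Hausdorff topological space. Let {F_s}_{s∈S} be a family of compact-valued multifunctions F_s : Ω → X such that the multifunction (ω, s) ↦ F_s(ω) on Ω × S (with the product σ-algebra of the σ-algebra on Ω and the Borel σ-algebra of S) is closed-measurable. Then the multifunction ω ↦ ⋂_{s∈S} F_s(ω) is universally closed-measurable. -/

import Mathlib

open TopologicalSpace MeasureTheory Set Filter
open scoped ENNReal NNReal Topology

/-- Core approximation: for an analytic set `A = range g` in a metrizable space and a finite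
measure `ν`, for every `ε ≠ 0` there is a measurable `B ⊆ A` with `ν A ≤ ν B + ε`. -/
theorem analytic_approx {Y : Type*} [TopologicalSpace Y] [T2Space Y]
    [MetrizableSpace Y] [MeasurableSpace Y] [OpensMeasurableSpace Y]
    (g : (ℕ → ℕ) → Y) (hg : Continuous g) (ν : Measure Y) [IsFiniteMeasure ν]
    {ε : ℝ≥0∞} (hε : ε ≠ 0) :
    ∃ B : Set Y, MeasurableSet B ∧ B ⊆ range g ∧ ν (range g) ≤ ν B + ε := by
  classical
  -- the family of "bounded prefix" sets
  set L : (ℕ → ℕ) → ℕ → Set (ℕ → ℕ) := fun b n => {x | ∀ i < n, x i ≤ b i} with hL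
  -- step existence
  have hex : ∀ (n : ℕ) (b : ℕ → ℕ), ∃ k : ℕ,
      ν (g '' L b n) ≤ ν (g '' (L b n ∩ {x | x n ≤ k})) + ε / 2 ^ (n + 1) := by
    intro n b
    have hmono : Monotone (fun k : ℕ => g '' (L b n ∩ {x | x n ≤ k})) := by
      intro k l hkl
      exact image_mono (inter_subset_inter_right _ (fun x hx => le_trans hx hkl))
    have hUnion : (⋃ k : ℕ, g '' (L b n ∩ {x | x n ≤ k})) = g '' L b n := by
      apply Subset.antisymm
      · exact iUnion_subset fun k => image_mono inter_subset_left
      · rintro y ⟨x, hx, rfl⟩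
        exact mem_iUnion.2 ⟨x n, mem_image_of_mem g ⟨hx, show x n ≤ x n from le_rfl⟩⟩
    have hsup : ν (g '' L b n) = ⨆ k : ℕ, ν (g '' (L b n ∩ {x | x n ≤ k})) := by
      rw [← hUnion, hmono.measure_iUnion]
    have hδ : ε / 2 ^ (n + 1) ≠ 0 := by
      simp [ENNReal.div_eq_zero_iff, hε, ENNReal.pow_ne_top ENNReal.ofNat_ne_top]
    by_cases h0 : ν (g '' L b n) = 0
    · exact ⟨0, by rw [h0]; exact zero_le⟩
    · have hfin : ν (g '' L b n) ≠ ⊤ := measure_ne_top ν _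
      have hlt : ν (g '' L b n) - ε / 2 ^ (n + 1) < ν (g '' L b n) :=
        ENNReal.sub_lt_self hfin h0 hδ
      obtain ⟨k, hk⟩ := lt_iSup_iff.1 (lt_of_lt_of_le hlt (le_of_eq hsup))
      exact ⟨k, tsub_le_iff_right.1 hk.le⟩
  -- recursive construction of the bounds
  let ch : ℕ → (ℕ → ℕ) → ℕ := fun n b => (hex n b).choose
  let bnds : ℕ → (ℕ → ℕ) := fun n =>
    Nat.rec (fun _ => 0) (fun m ih => Function.update ih m (ch m ih)) n
  set β : ℕ → ℕ := fun n => bnds (n + 1) n with hβ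
  have hβval : ∀ n, β n = ch n (bnds n) := fun n => Function.update_self n _ _
  have hstab : ∀ m n, n < m → bnds m n = β n := by
    intro m
    induction m with
    | zero => omega
    | succ m ih =>
      intro n hn
      rcases Nat.lt_succ_iff_lt_or_eq.1 hn with h | h
      · have : bnds (m + 1) n = bnds m n := Function.update_of_ne (by omega) _ _
        rw [this, ih n h]
      · subst h; rfl
  have hLeq : ∀ n, L β n = L (bnds n) n := by
    intro n
    ext x
    simp only [hL, mem_setOf_eq]
    constructor <;> intro h i hi
    · rw [hstab n i hi]; exact h i hi
    · rw [← hstab n i hi]; exact h i hi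
  -- invariant
  have hinv : ∀ n, ν (range g) ≤ ν (g '' L β n) + ∑ i ∈ Finset.range n, ε / 2 ^ (i + 1) := by
    intro n
    induction n with
    | zero =>
      have : L β 0 = univ := by ext x; simp [hL]
      simp [this, image_univ]
    | succ n ih =>
      have hstep := (hex n (bnds n)).choose_spec
      have h1 : L (bnds n) n ∩ {x | x n ≤ ch n (bnds n)} = L β (n + 1) := by
        ext x
        simp only [hL, mem_inter_iff, mem_setOf_eq]
        constructor
        · rintro ⟨h2, h3⟩ i hi
          rcases Nat.lt_succ_iff_lt_or_eq.1 hi with h | h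
          · rw [← hstab n i h]; exact h2 i h
          · subst h; rw [hβval i]; exact h3
        · intro h2
          refine ⟨fun i hi => ?_, ?_⟩
          · rw [hstab n i hi]; exact h2 i (Nat.lt_succ_of_lt hi)
          · have h4 := h2 n (Nat.lt_succ_self n)
            rwa [hβval n] at h4
      rw [hLeq n] at ih
      calc ν (range g) ≤ ν (g '' L (bnds n) n) + ∑ i ∈ Finset.range n, ε / 2 ^ (i + 1) := ih
        _ ≤ (ν (g '' (L (bnds n) n ∩ {x | x n ≤ ch n (bnds n)})) + ε / 2 ^ (n + 1))
              + ∑ i ∈ Finset.range n, ε / 2 ^ (i + 1) := by gcongr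
        _ = ν (g '' L β (n + 1)) + ∑ i ∈ Finset.range (n + 1), ε / 2 ^ (i + 1) := by
            rw [h1, Finset.sum_range_succ]; ring
  -- geometric bound
  have hgeom : ∀ n, (∑ i ∈ Finset.range n, ε / 2 ^ (i + 1)) ≤ ε := by
    have key : ∀ n, (∑ i ∈ Finset.range n, ε / 2 ^ (i + 1)) + ε / 2 ^ n ≤ ε := by
      intro n
      induction n with
      | zero => simp
      | succ n ih =>
        rw [Finset.sum_range_succ]
        have hdd : ε / 2 ^ (n + 1) = ε / 2 ^ n / 2 := by
          rw [div_eq_mul_inv, div_eq_mul_inv, div_eq_mul_inv, ENNReal.inv_pow,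
            ENNReal.inv_pow, pow_succ, mul_assoc]
        have h2 : ε / 2 ^ (n + 1) + ε / 2 ^ (n + 1) = ε / 2 ^ n := by
          rw [hdd, ENNReal.add_halves]
        calc ∑ i ∈ Finset.range n, ε / 2 ^ (i + 1) + ε / 2 ^ (n + 1) + ε / 2 ^ (n + 1)
            = ∑ i ∈ Finset.range n, ε / 2 ^ (i + 1) + ε / 2 ^ n := by rw [add_assoc, h2]
          _ ≤ ε := ih
    exact fun n => le_trans (le_add_right le_rfl) (key n)
  -- the closed approximations
  set Cn : ℕ → Set Y := fun n => closure (g '' L β n) with hCn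
  have hanti : Antitone Cn := by
    intro m n hmn
    apply closure_mono
    apply image_mono
    intro x hx i hi
    exact hx i (lt_of_lt_of_le hi hmn)
  have hmeasCn : ∀ n, MeasurableSet (Cn n) := fun n => isClosed_closure.measurableSet
  set B := ⋂ n, Cn n with hB
  have hmeasB : MeasurableSet B := MeasurableSet.iInter hmeasCn
  -- the diagonal argument : B ⊆ g '' Q ⊆ range g
  have hBsub : B ⊆ range g := by
    letI : MetricSpace Y := TopologicalSpace.metrizableSpaceMetric Y
    intro y hy
    have hy' : ∀ n : ℕ, ∃ x, x ∈ L β n ∧ dist y (g x) < 1 / (n + 1) := by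
      intro n
      have h1 : y ∈ closure (g '' L β n) := mem_iInter.1 hy n
      obtain ⟨b, hb, hdist⟩ := Metric.mem_closure_iff.1 h1 (1 / (n + 1)) (by positivity)
      obtain ⟨x, hx, rfl⟩ := hb
      exact ⟨x, hx, hdist⟩
    choose x hxL hxd using hy'
    set Q : Set (ℕ → ℕ) := univ.pi fun i => Iic (β i) with hQ
    have hQc : IsCompact Q := isCompact_univ_pi fun i => (finite_Iic _).isCompact
    set z : ℕ → (ℕ → ℕ) := fun n i => min (x n i) (β i) with hz
    have hzQ : ∀ n, z n ∈ Q := fun n => by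
      intro i _
      exact mem_Iic.mpr (min_le_right _ _)
    obtain ⟨a, haQ, φ, hφ, hφt⟩ := hQc.tendsto_subseq hzQ
    have hxa : Tendsto (fun k => x (φ k)) atTop (𝓝 a) := by
      rw [tendsto_pi_nhds]
      intro i
      have h1 : Tendsto (fun k => z (φ k) i) atTop (𝓝 (a i)) :=
        ((continuous_apply i).continuousAt.tendsto.comp hφt)
      apply h1.congr'
      filter_upwards [eventually_ge_atTop (i + 1)] with k hk
      have hik : i < φ k := lt_of_lt_of_le (by omega) (le_trans hk (hφ.le_apply))
      simp only [hz]
      exact min_eq_left (hxL (φ k) i hik)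
    have hgy : Tendsto (fun n => g (x n)) atTop (𝓝 y) := by
      rw [tendsto_iff_dist_tendsto_zero]
      apply squeeze_zero (fun n => dist_nonneg) (fun n => (dist_comm (g (x n)) y ▸ (hxd n).le))
      exact tendsto_one_div_add_atTop_nhds_zero_nat
    have h2 : Tendsto (fun k => g (x (φ k))) atTop (𝓝 (g a)) :=
      (hg.continuousAt.tendsto).comp hxa
    have h3 : Tendsto (fun k => g (x (φ k))) atTop (𝓝 y) :=
      hgy.comp hφ.tendsto_atTop
    have : y = g a := tendsto_nhds_unique h3 h2
    exact ⟨a, this.symm⟩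
  -- measure estimate
  refine ⟨B, hmeasB, hBsub, ?_⟩
  have h1 : ∀ n, ν (range g) ≤ ν (Cn n) + ε := by
    intro n
    calc ν (range g) ≤ ν (g '' L β n) + ∑ i ∈ Finset.range n, ε / 2 ^ (i + 1) := hinv n
      _ ≤ ν (Cn n) + ε := add_le_add (measure_mono subset_closure) (hgeom n)
  have h2 : ν B = ⨅ n, ν (Cn n) :=
    hanti.measure_iInter (fun n => (hmeasCn n).nullMeasurableSet) ⟨0, measure_ne_top ν _⟩
  rw [h2, ENNReal.iInf_add]
  exact le_iInf fun n => h1 n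

/-- Analytic sets are universally (null-)measurable. -/
theorem analyticSet_nullMeasurableSet {Y : Type*} [TopologicalSpace Y] [T2Space Y]
    [MetrizableSpace Y] [MeasurableSpace Y] [OpensMeasurableSpace Y]
    {A : Set Y} (hA : AnalyticSet A) (ν : Measure Y) [IsFiniteMeasure ν] :
    NullMeasurableSet A ν := by
  rw [MeasureTheory.AnalyticSet] at hA
  rcases hA with rfl | ⟨g, hg, rfl⟩
  · exact MeasurableSet.empty.nullMeasurableSet
  · have key : ∀ m : ℕ, ∃ B : Set Y, MeasurableSet B ∧ B ⊆ range g ∧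
        ν (range g) ≤ ν B + ((m : ℝ≥0∞) + 1)⁻¹ := fun m =>
      analytic_approx g hg ν (ENNReal.inv_ne_zero.2 (by simp))
    choose Bs hBmeas hBsub hBle using key
    set B := ⋃ m, Bs m with hB
    have hBm : MeasurableSet B := MeasurableSet.iUnion hBmeas
    have hBsub' : B ⊆ range g := iUnion_subset hBsub
    have hle : ν (range g) ≤ ν B := by
      refine ENNReal.le_of_forall_pos_le_add fun ε hε _ => ?_
      obtain ⟨n, hn⟩ := ENNReal.exists_inv_nat_lt (by exact_mod_cast hε.ne' : (ε : ℝ≥0∞) ≠ 0)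
      calc ν (range g) ≤ ν (Bs n) + ((n : ℝ≥0∞) + 1)⁻¹ := hBle n
        _ ≤ ν B + (n : ℝ≥0∞)⁻¹ :=
            add_le_add (measure_mono (subset_iUnion Bs n)) (ENNReal.inv_le_inv' le_self_add)
        _ ≤ ν B + ε := add_le_add_right hn.le _
    have hdiff : ν (range g \ B) = 0 := by
      have h1 : range g ⊆ toMeasurable ν (range g) := subset_toMeasurable _ _
      have h2 : B ⊆ toMeasurable ν (range g) := hBsub'.trans h1
      have h3 : ν (toMeasurable ν (range g) \ B) = ν (toMeasurable ν (range g)) - ν B :=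
        measure_diff h2 hBm.nullMeasurableSet (measure_ne_top ν B)
      have h5 : ν (toMeasurable ν (range g) \ B) = 0 := by
        rw [h3, measure_toMeasurable]
        exact tsub_eq_zero_of_le hle
      exact measure_mono_null (diff_subset_diff_left h1) h5
    have hrep : range g = B ∪ (range g \ B) := (union_diff_cancel hBsub').symm
    rw [hrep]
    exact hBm.nullMeasurableSet.union (NullMeasurableSet.of_null hdiff)


/-- Any set in a product σ-algebra factors through a measurable map to the Cantor-like
space `ℕ → Bool` on the first coordinate. -/
theorem exists_factor_through_cantor {Ω : Type*} [MeasurableSpace Ω]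
    {Z : Type*} [MeasurableSpace Z] (M : Set (Ω × Z)) (hM : MeasurableSet M) :
    ∃ φ : Ω → (ℕ → Bool), Measurable φ ∧ ∃ M' : Set ((ℕ → Bool) × Z),
      MeasurableSet M' ∧ M = (fun p => (φ p.1, p.2)) ⁻¹' M' := by
  classical
  set P : Set (Ω × Z) → Prop := fun M =>
    ∃ φ : Ω → (ℕ → Bool), Measurable φ ∧ ∃ M' : Set ((ℕ → Bool) × Z),
      MeasurableSet M' ∧ M = (fun p => (φ p.1, p.2)) ⁻¹' M' with hP
  have hempty : P ∅ := ⟨fun _ _ => true, measurable_const, ∅, MeasurableSet.empty, by simp⟩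
  have hcompl : ∀ s, P s → P sᶜ := by
    rintro s ⟨φ, hφ, M', hM', rfl⟩
    exact ⟨φ, hφ, M'ᶜ, hM'.compl, rfl⟩
  have hunion : ∀ f : ℕ → Set (Ω × Z), (∀ n, P (f n)) → P (⋃ n, f n) := by
    intro f hf
    choose φs hφs Ms hMs hreps using hf
    set e : ℕ × ℕ ≃ ℕ := Denumerable.eqv (ℕ × ℕ) with he
    set φ : Ω → ℕ → Bool := fun ω m => φs (e.symm m).1 ω (e.symm m).2 with hφdef
    have hφ : Measurable φ := by
      apply measurable_pi_lambda
      intro m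
      exact (measurable_pi_apply _).comp (hφs _)
    set r : ℕ → (ℕ → Bool) → (ℕ → Bool) := fun n y k => y (e (n, k)) with hr
    have hrmeas : ∀ n, Measurable (r n) :=
      fun n => measurable_pi_lambda _ fun k => measurable_pi_apply _
    have hkey : ∀ n ω, r n (φ ω) = φs n ω := by
      intro n ω
      funext k
      simp [hr, hφdef, Equiv.symm_apply_apply]
    refine ⟨φ, hφ, ⋃ n, (fun q : (ℕ → Bool) × Z => (r n q.1, q.2)) ⁻¹' Ms n, ?_, ?_⟩
    · exact MeasurableSet.iUnion fun n =>
        (((hrmeas n).comp measurable_fst).prodMk measurable_snd) (hMs n)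
    · ext ⟨ω, z⟩
      simp only [mem_iUnion, mem_preimage, hkey]
      constructor
      · rintro ⟨n, hn⟩
        exact ⟨n, by rw [hreps n] at hn; exact hn⟩
      · rintro ⟨n, hn⟩
        exact ⟨n, by rw [hreps n]; exact hn⟩
  set m' : MeasurableSpace (Ω × Z) :=
    { MeasurableSet' := P
      measurableSet_empty := hempty
      measurableSet_compl := hcompl
      measurableSet_iUnion := hunion } with hm'
  have hle : (Prod.instMeasurableSpace : MeasurableSpace (Ω × Z)) ≤ m' := by
    apply sup_le
    · rintro s ⟨A, hA, rfl⟩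
      refine ⟨fun ω _ => if ω ∈ A then true else false,
        measurable_pi_lambda _ fun _ => Measurable.ite hA measurable_const measurable_const,
        {q | q.1 0 = true}, ?_, ?_⟩
      · show MeasurableSet ((fun q : (ℕ → Bool) × Z => q.1 0) ⁻¹' {true})
        exact ((measurable_pi_apply 0).comp measurable_fst) (measurableSet_singleton true)
      · ext ⟨ω, z⟩
        by_cases h : ω ∈ A <;> simp [h]
    · rintro s ⟨B, hB, rfl⟩
      exact ⟨fun _ _ => true, measurable_const, Prod.snd ⁻¹' B, measurable_snd hB, rfl⟩
  exact hle M hM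


/-- Measurable projection: projection to `Ω` of a product-measurable subset of `Ω × S`,
where `S` is a continuous image of `ℕ → ℕ`, is null-measurable for every finite measure. -/
theorem nullMeasurableSet_proj {Ω : Type*} [MeasurableSpace Ω]
    {S : Type*} [TopologicalSpace S] [MeasurableSpace S] [BorelSpace S]
    (h : (ℕ → ℕ) → S) (hc : Continuous h) (hsurj : Function.Surjective h)
    {M : Set (Ω × S)} (hM : MeasurableSet M) (μ : Measure Ω) [IsFiniteMeasure μ] :
    NullMeasurableSet {ω | ∃ s, (ω, s) ∈ M} μ := by
  have hhm : Measurable h := hc.measurable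
  set M₂ : Set (Ω × (ℕ → ℕ)) := (fun p : Ω × (ℕ → ℕ) => (p.1, h p.2)) ⁻¹' M with hM₂
  have hM₂m : MeasurableSet M₂ := (measurable_fst.prodMk (hhm.comp measurable_snd)) hM
  obtain ⟨φ, hφ, M', hM', hrep⟩ := exists_factor_through_cantor M₂ hM₂m
  have hset : {ω | ∃ s, (ω, s) ∈ M} = φ ⁻¹' (Prod.fst '' M') := by
    ext ω
    simp only [mem_setOf_eq, mem_preimage]
    constructor
    · rintro ⟨s, hs⟩
      obtain ⟨x, rfl⟩ := hsurj s
      have h2 : (ω, x) ∈ M₂ := hs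
      rw [hrep] at h2
      exact ⟨(φ ω, x), h2, rfl⟩
    · rintro ⟨⟨y, x⟩, hyx, hy⟩
      obtain rfl : y = φ ω := hy
      refine ⟨h x, ?_⟩
      have h2 : (ω, x) ∈ M₂ := by rw [hrep]; exact hyx
      exact h2
  have hA : AnalyticSet (Prod.fst '' M') := by
    haveI : PolishSpace ((ℕ → Bool) × (ℕ → ℕ)) :=
      instPolishSpaceOfSeparableSpaceOfIsCompletelyMetrizableSpace
    exact (hM'.analyticSet).image_of_continuous continuous_fst
  rw [hset]
  exact (analyticSet_nullMeasurableSet hA (μ.map φ)).preimage (hφ.quasiMeasurePreserving μ)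

/-- The intersection of a closed-measurable Souslin family of compact-valued
multifunctions into a second countable Hausdorff space is universally
closed-measurable. -/
theorem stmt_5 {Ω : Type*} [MeasurableSpace Ω]
    {S : Type*} [TopologicalSpace S] [MetrizableSpace S] [MeasurableSpace S] [BorelSpace S]
    (hS : ∃ (P : Type) (tP : TopologicalSpace P), @PolishSpace P tP ∧
      ∃ f : P → S, @Continuous P S tP _ f ∧ Function.Surjective f)
    {X : Type*} [TopologicalSpace X] [T2Space X] [SecondCountableTopology X]
    (F : S → Ω → Set X)
    (hFcp : ∀ s ω, IsCompact (F s ω))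
    (hF : ∀ C : Set X, IsClosed C →
      MeasurableSet {p : Ω × S | (F p.2 p.1 ∩ C).Nonempty}) :
    ∀ C : Set X, IsClosed C → ∀ (μ : Measure Ω), IsFiniteMeasure μ →
      NullMeasurableSet {ω | ((⋂ s, F s ω) ∩ C).Nonempty} μ := by
  classical
  intro C hC μ hμ
  haveI := hμ
  rcases isEmpty_or_nonempty S with hS0 | hS0
  · have hI : ∀ ω : Ω, (⋂ s : S, F s ω) = univ := fun ω => iInter_of_empty _
    by_cases hCne : C.Nonempty
    · have hval : {ω | ((⋂ s, F s ω) ∩ C).Nonempty} = univ := by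
        ext ω; simp [hI ω, hCne]
      rw [hval]; exact MeasurableSet.univ.nullMeasurableSet
    · have hval : {ω | ((⋂ s, F s ω) ∩ C).Nonempty} = ∅ := by
        ext ω; simp [hI ω]
        simpa [nonempty_iff_ne_empty] using hCne
      rw [hval]; exact MeasurableSet.empty.nullMeasurableSet
  · obtain ⟨P, tP, hPol, f, hfc, hfs⟩ := hS
    have hPne : Nonempty P := by
      obtain ⟨s0⟩ := hS0
      obtain ⟨p, -⟩ := hfs s0
      exact ⟨p⟩
    obtain ⟨g0, hg0c, hg0s⟩ := @PolishSpace.exists_nat_nat_continuous_surjective P tP hPol hPne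
    set h : (ℕ → ℕ) → S := f ∘ g0 with hh
    have hhc : Continuous h := hfc.comp hg0c
    have hhs : Function.Surjective h := hfs.comp hg0s
    -- basis enumeration
    obtain ⟨e, he⟩ := ((countable_countableBasis X).insert ∅).exists_eq_range
      (insert_nonempty _ _)
    have heOpen : ∀ j, IsOpen (e j) := by
      intro j
      have hmem : e j ∈ insert ∅ (countableBasis X) := by rw [he]; exact mem_range_self _
      rcases hmem with h1 | h1
      · rw [h1]; exact isOpen_empty
      · exact isOpen_of_mem_countableBasis h1
    have hbasis : ∀ U ∈ countableBasis X, ∃ j, e j = U := by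
      intro U hU
      have : U ∈ range e := by rw [← he]; exact mem_insert_of_mem _ hU
      exact this
    -- projection helper
    have hproj : ∀ C' : Set X, IsClosed C' →
        NullMeasurableSet {ω | ∃ s, F s ω ∩ C' = ∅} μ := by
      intro C' hC'
      have hMm : MeasurableSet ({p : Ω × S | (F p.2 p.1 ∩ C').Nonempty}ᶜ) := (hF C' hC').compl
      have hseteq : {ω | ∃ s, (ω, s) ∈ ({p : Ω × S | (F p.2 p.1 ∩ C').Nonempty}ᶜ)} =
          {ω | ∃ s, F s ω ∩ C' = ∅} := by
        ext ω
        simp [not_nonempty_iff_eq_empty]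
      rw [← hseteq]
      exact nullMeasurableSet_proj h hhc hhs hMm μ
    -- the pieces
    set U : Finset ℕ → Set X := fun u => ⋃ j ∈ u, e j with hU
    have hUopen : ∀ u, IsOpen (U u) := fun u => isOpen_biUnion fun j _ => heOpen j
    set good : Finset ℕ → Set Ω := fun u =>
      {ω | ∃ s, F s ω ∩ (C ∩ (U u)ᶜ) = ∅} ∩
        ⋂ j ∈ u, {ω | ∃ s, F s ω ∩ (C ∩ closure (e j)) = ∅} with hgood
    have hgoodnm : ∀ u, NullMeasurableSet (good u) μ := by
      intro u
      refine (hproj _ (hC.inter (hUopen u).isClosed_compl)).inter ?_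
      exact NullMeasurableSet.biInter u.countable_toSet
        fun j _ => hproj _ (hC.inter isClosed_closure)
    -- the key set identity
    have hTc : {ω | ((⋂ s, F s ω) ∩ C).Nonempty}ᶜ = ⋃ u : Finset ℕ, good u := by
      ext ω
      simp only [mem_compl_iff, mem_setOf_eq, not_nonempty_iff_eq_empty, mem_iUnion]
      constructor
      · -- forward: from empty intersection produce a finite witness
        intro hemp
        obtain ⟨s₀⟩ := hS0
        have hK₀ : IsCompact (F s₀ ω ∩ C) := (hFcp s₀ ω).inter_right hC
        have hZcl : ∀ s : S, IsClosed (F s ω ∩ C) :=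
          fun s => ((hFcp s ω).isClosed).inter hC
        have hglob : (F s₀ ω ∩ C) ∩ ⋂ s : S, (F s ω ∩ C) = ∅ := by
          apply eq_empty_of_subset_empty
          intro x hx
          rw [← hemp]
          rcases hx with ⟨-, hx2⟩
          have h3 : ∀ s : S, x ∈ F s ω ∩ C := fun s => mem_iInter.1 hx2 s
          exact ⟨mem_iInter.2 fun s => (h3 s).1, (h3 s₀).2⟩
        obtain ⟨t, ht⟩ := hK₀.elim_finite_subfamily_closed _ hZcl hglob
        -- for each point of K₀ find a basic neighborhood whose closure misses some F s ω ∩ C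
        set G : Set ℕ := {j | ∃ s ∈ t, (F s ω ∩ C) ∩ closure (e j) = ∅} with hG
        set O : ℕ → Set X := fun j => if j ∈ G then e j else ∅ with hO
        have hOopen : ∀ j, IsOpen (O j) := by
          intro j
          rw [hO]
          dsimp only
          split
          · exact heOpen j
          · exact isOpen_empty
        have hOsub : ∀ j, O j ⊆ e j := by
          intro j
          rw [hO]
          dsimp only
          split
          · exact Subset.rfl
          · exact empty_subset _
        have hOG : ∀ j, (O j).Nonempty → j ∈ G := by
          intro j hj
          by_contra hjG
          rw [hO] at hj
          simp only [if_neg hjG] at hj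
          exact not_nonempty_empty hj
        have hcover : (F s₀ ω ∩ C) ⊆ ⋃ j, O j := by
          intro x hx
          have hxn : x ∉ ⋂ s ∈ t, (F s ω ∩ C) := by
            intro hxin
            have hx2 : x ∈ (F s₀ ω ∩ C) ∩ ⋂ s ∈ t, (F s ω ∩ C) := ⟨hx, hxin⟩
            rw [ht] at hx2
            exact hx2
          obtain ⟨s, hst, hxs⟩ : ∃ s ∈ t, x ∉ F s ω ∩ C := by
            by_contra hcon
            push_neg at hcon
            exact hxn (mem_iInter₂.2 hcon)
          obtain ⟨V, W, hVo, hWo, hxV, hsW, hVW⟩ :=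
            SeparatedNhds.of_isCompact_isCompact isCompact_singleton
              ((hFcp s ω).inter_right hC) (disjoint_singleton_left.2 hxs)
          obtain ⟨b, hb, hxb, hbV⟩ :=
            (isBasis_countableBasis X).exists_subset_of_mem_open (hxV rfl) hVo
          obtain ⟨j, rfl⟩ := hbasis b hb
          have hclW : closure (e j) ∩ W = ∅ := by
            have h1 : e j ⊆ Wᶜ := fun y hy hyW => (disjoint_left.1 hVW (hbV hy)) hyW
            have h2 : closure (e j) ⊆ Wᶜ := closure_minimal h1 (hWo.isClosed_compl)
            exact eq_empty_of_subset_empty fun y hy => (h2 hy.1) hy.2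
          have hjG : j ∈ G := by
            refine ⟨s, hst, ?_⟩
            apply eq_empty_of_subset_empty
            rintro y ⟨hy1, hy2⟩
            have hyW : y ∈ closure (e j) ∩ W := ⟨hy2, hsW hy1⟩
            rw [hclW] at hyW
            exact hyW
          refine mem_iUnion.2 ⟨j, ?_⟩
          rw [hO]
          dsimp only
          rw [if_pos hjG]
          exact hxb
        obtain ⟨t', ht'⟩ := hK₀.elim_finite_subcover O hOopen hcover
        set u : Finset ℕ := t'.filter (fun j => j ∈ G) with hu
        refine ⟨u, ?_, ?_⟩
        · -- first component: K₀ is inside U u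
          refine ⟨s₀, ?_⟩
          apply eq_empty_of_subset_empty
          rintro x ⟨hx1, hx2, hx3⟩
          apply hx3
          have hxin := ht' ⟨hx1, hx2⟩
          obtain ⟨j, hj1, hj2⟩ := mem_iUnion₂.1 hxin
          have hjG : j ∈ G := hOG j ⟨x, hj2⟩
          have hju : j ∈ u := by
            rw [hu, Finset.mem_filter]
            exact ⟨hj1, hjG⟩
          exact mem_biUnion hju (hOsub j hj2)
        · -- second component
          refine mem_iInter₂.2 fun j hj => ?_
          have hjG : j ∈ G := by
            rw [hu, Finset.mem_filter] at hj
            exact hj.2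
          obtain ⟨s, hst, hs⟩ := hjG
          refine ⟨s, ?_⟩
          rw [← inter_assoc]
          rwa [inter_comm (F s ω) C, inter_assoc, inter_comm C] at hs ⊢
      · -- backward
        rintro ⟨u, ⟨s₀, hs₀⟩, hrest⟩
        apply eq_empty_of_subset_empty
        rintro x ⟨hx1, hx2⟩
        have hxF : ∀ s : S, x ∈ F s ω := fun s => mem_iInter.1 hx1 s
        have hxU : x ∈ U u := by
          by_contra hxU
          have : x ∈ F s₀ ω ∩ (C ∩ (U u)ᶜ) := ⟨hxF s₀, hx2, hxU⟩
          rw [hs₀] at this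
          exact this
        obtain ⟨j, hju, hxj⟩ := mem_iUnion₂.1 hxU
        obtain ⟨s, hs⟩ := mem_iInter₂.1 hrest j hju
        have : x ∈ F s ω ∩ (C ∩ closure (e j)) := ⟨hxF s, hx2, subset_closure hxj⟩
        rw [hs] at this
        exact this
    rw [← compl_compl {ω | ((⋂ s, F s ω) ∩ C).Nonempty}, hTc]
    exact (NullMeasurableSet.iUnion fun u => hgoodnm u).compl
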